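/- Assume in addition b1 > b2 and set x* = (b2/(b1−b2))·((b1/b2)·d − D) and y* = (b1/(b1−b2))·(D−d). Then the point Ẽ3 = (x*, x*·a1/c1, x*·a2/c2, x*·a2·a3/(c2·c3), x*·a2·a3·a4/(c2·c3·c4), y*, y*·A1/C1, y*·A2/C2, y*·A2·A3/(C2·C3), y*·A2·A3·A4/(C2·C3·C4)) is a steady state of system (3), i.e. F(Ẽ3) = 0. -/
import Mathlib
set_option maxHeartbeats 2000000


/-- The vector field of system (3). Coordinates: `p 0,…,p 4` are
`x0,…,x4` and `p 5,…,p 9` are `y0,…,y4`. -/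
noncomputable def F (a0 a1 a2 a3 a4 c0 c1 c2 c3 c4 A0 A1 A2 A3 A4 C0 C1 C2 C3 C4 b1 b2 B : ℝ)
    (p : Fin 10 → ℝ) : Fin 10 → ℝ :=
  ![(a0 / (1 + b1 * p 0 + b2 * p 5) - a1 - c0) * p 0 + c1 * p 1,
    a1 * p 0 - c1 * p 1,
    a2 * p 0 - c2 * p 2,
    a3 * p 2 - c3 * p 3,
    a4 * p 3 - c4 * p 4,
    (A0 / (1 + B * (p 0 + p 5)) - A1 - C0) * p 5 + C1 * p 6,
    A1 * p 5 - C1 * p 6,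
    A2 * p 5 - C2 * p 7,
    A3 * p 7 - C3 * p 8,
    A4 * p 8 - C4 * p 9]

/-- `Ẽ3` is a steady state of system (3). -/
theorem stmt3 (a0 a1 a2 a3 a4 c0 c1 c2 c3 c4 A0 A1 A2 A3 A4 C0 C1 C2 C3 C4 b1 b2 B d D xs ys : ℝ)
    (ha0 : 0 < a0) (ha1 : 0 < a1) (ha2 : 0 < a2) (ha3 : 0 < a3) (ha4 : 0 < a4)
    (hc0 : 0 < c0) (hc1 : 0 < c1) (hc2 : 0 < c2) (hc3 : 0 < c3) (hc4 : 0 < c4)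
    (hA0 : 0 < A0) (hA1 : 0 < A1) (hA2 : 0 < A2) (hA3 : 0 < A3) (hA4 : 0 < A4)
    (hC0 : 0 < C0) (hC1 : 0 < C1) (hC2 : 0 < C2) (hC3 : 0 < C3) (hC4 : 0 < C4)
    (hb1 : 0 < b1) (hb2 : 0 < b2) (hB : 0 < B)
    (hac : c0 < a0) (hAC : C0 < A0)
    (hd : d = (a0 - c0) / (b1 * c0)) (hD : D = (A0 - C0) / (B * C0))
    (hb : b2 < b1)
    (hxs : xs = b2 / (b1 - b2) * (b1 / b2 * d - D))
    (hys : ys = b1 / (b1 - b2) * (D - d)) :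
    F a0 a1 a2 a3 a4 c0 c1 c2 c3 c4 A0 A1 A2 A3 A4 C0 C1 C2 C3 C4 b1 b2 B
      ![xs, xs * a1 / c1, xs * a2 / c2, xs * a2 * a3 / (c2 * c3),
        xs * a2 * a3 * a4 / (c2 * c3 * c4),
        ys, ys * A1 / C1, ys * A2 / C2, ys * A2 * A3 / (C2 * C3),
        ys * A2 * A3 * A4 / (C2 * C3 * C4)] = 0 := by
  have ha0' : a0 ≠ 0 := ne_of_gt ha0
  have hc0' : c0 ≠ 0 := ne_of_gt hc0
  have hA0' : A0 ≠ 0 := ne_of_gt hA0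
  have hC0' : C0 ≠ 0 := ne_of_gt hC0
  have hc1' : c1 ≠ 0 := ne_of_gt hc1
  have hc2' : c2 ≠ 0 := ne_of_gt hc2
  have hc3' : c3 ≠ 0 := ne_of_gt hc3
  have hc4' : c4 ≠ 0 := ne_of_gt hc4
  have hC1' : C1 ≠ 0 := ne_of_gt hC1
  have hC2' : C2 ≠ 0 := ne_of_gt hC2
  have hC3' : C3 ≠ 0 := ne_of_gt hC3
  have hC4' : C4 ≠ 0 := ne_of_gt hC4
  have hbb : b1 - b2 ≠ 0 := by
    have : (0:ℝ) < b1 - b2 := by linarith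
    exact ne_of_gt this
  have hb1' : b1 ≠ 0 := ne_of_gt hb1
  have hb2' : b2 ≠ 0 := ne_of_gt hb2
  have hB' : B ≠ 0 := ne_of_gt hB
  have h1 : 1 + b1 * xs + b2 * ys = a0 / c0 := by
    rw [hxs, hys, hd, hD]
    field_simp
    ring
  have h2 : 1 + B * (xs + ys) = A0 / C0 := by
    rw [hxs, hys, hd, hD]
    field_simp
    ring
  have hA : a0 / (a0 / c0) = c0 := by field_simp
  have hA' : A0 / (A0 / C0) = C0 := by field_simp
  funext i
  fin_cases i
  · show (a0 / (1 + b1 * xs + b2 * ys) - a1 - c0) * xs + c1 * (xs * a1 / c1) = 0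
    rw [h1, hA]
    field_simp
    ring
  · show a1 * xs - c1 * (xs * a1 / c1) = 0
    field_simp
    ring
  · show a2 * xs - c2 * (xs * a2 / c2) = 0
    field_simp
    ring
  · show a3 * (xs * a2 / c2) - c3 * (xs * a2 * a3 / (c2 * c3)) = 0
    field_simp
    ring
  · show a4 * (xs * a2 * a3 / (c2 * c3)) - c4 * (xs * a2 * a3 * a4 / (c2 * c3 * c4)) = 0
    field_simp
    ring
  · show (A0 / (1 + B * (xs + ys)) - A1 - C0) * ys + C1 * (ys * A1 / C1) = 0
    rw [h2, hA']
    field_simp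
    ring
  · show A1 * ys - C1 * (ys * A1 / C1) = 0
    field_simp
    ring
  · show A2 * ys - C2 * (ys * A2 / C2) = 0
    field_simp
    ring
  · show A3 * (ys * A2 / C2) - C3 * (ys * A2 * A3 / (C2 * C3)) = 0
    field_simp
    ring
  · show A4 * (ys * A2 * A3 / (C2 * C3)) - C4 * (ys * A2 * A3 * A4 / (C2 * C3 * C4)) = 0
    field_simp
    ring
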